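/- Let A = ℂ[H, E₁, E₂]/(H² − E₂², H·E₁, E₁² − 2H·E₂) with bilinear form determined by ⟨H^i, H^j⟩ = (1/8)δ_{i+j,3} together with the algebra relations and the Frobenius property. Then n := 4H is nilpotent of order 4 in A, and the filtration from the nilpotent construction is I_0 = (H) ⊂ I_1 = (H, E₁) ⊂ I_2 = I_3 = (H, E₁, E₂) ⊂ I_4 = A, with pairings (H^i, H^j)_0 = (1/32)δ_{i+j,4}, (E₁, E₁E₂)_1 = 1/4, (E₂, E₂)_2 = 1/2, and (1,1)_4 = 8. -/

import Mathlib

/-- the Chen–Ruan orbifold cohomology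
`A = ℂ[H,E₁,E₂]/(H² − E₂², H·E₁, E₁² − 2H·E₂)` of `ℙ(1,1,2,4)` (with its basis
`1, H, E₁, E₂, H², H·E₂, E₁·E₂, H³`) and the Frobenius form determined by
`⟨H^i,H^j⟩ = (1/8)δ_{i+j,3}`: the element `n = 4H` is nilpotent of order `4`, and
the filtration from the nilpotent construction is
`I_0 = (H) ⊂ I_1 = (H,E₁) ⊂ I_2 = I_3 = (H,E₁,E₂) ⊂ I_4 = A`, with pairings
`(H^i,H^j)_0 = (1/32)δ_{i+j,4}`, `(E₁,E₁E₂)_1 = 1/4`, `(E₂,E₂)_2 = 1/2`,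
`(1,1)_4 = 8`. -/
theorem stmt6 {A : Type*} [CommRing A] [Algebra ℂ A]
    (H E₁ E₂ : A)
    (hrel1 : H ^ 2 = E₂ ^ 2) (hrel2 : H * E₁ = 0) (hrel3 : E₁ ^ 2 = 2 * (H * E₂))
    (bA : Module.Basis (Fin 8) ℂ A)
    (hbA : bA 0 = 1 ∧ bA 1 = H ∧ bA 2 = E₁ ∧ bA 3 = E₂ ∧ bA 4 = H ^ 2 ∧
      bA 5 = H * E₂ ∧ bA 6 = E₁ * E₂ ∧ bA 7 = H ^ 3)
    (B : A →ₗ[ℂ] A →ₗ[ℂ] ℂ)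
    (hsymm : ∀ x y : A, B x y = B y x)
    (hnondeg : ∀ x : A, (∀ y : A, B x y = 0) → x = 0)
    (hfrob : ∀ x y z : A, B (x * y) z = B x (y * z))
    (hBH : ∀ i j : ℕ, i ≤ 3 → j ≤ 3 →
      B (H ^ i) (H ^ j) = if i + j = 3 then 1 / 8 else 0) :
    let n : A := (4 : ℂ) • H
    -- n = 4H is nilpotent of order 4
    (n ^ 4 = 0 ∧ n ^ 3 ≠ 0) ∧
    -- the filtration I_0 = (H) ⊂ I_1 = (H,E₁) ⊂ I_2 = I_3 = (H,E₁,E₂) ⊂ I_4 = A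
    (LinearMap.range (LinearMap.mulRight ℂ n)
      = LinearMap.range (LinearMap.mulRight ℂ H)) ∧
    (LinearMap.range (LinearMap.mulRight ℂ n) ⊔
        LinearMap.ker (LinearMap.mulRight ℂ n)
      = LinearMap.range (LinearMap.mulRight ℂ H) ⊔
          LinearMap.range (LinearMap.mulRight ℂ E₁)) ∧
    (∀ k : ℕ, k = 2 ∨ k = 3 →
      LinearMap.range (LinearMap.mulRight ℂ n) ⊔
          LinearMap.ker (LinearMap.mulRight ℂ (n ^ k))
        = LinearMap.range (LinearMap.mulRight ℂ H) ⊔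
            LinearMap.range (LinearMap.mulRight ℂ E₁) ⊔
            LinearMap.range (LinearMap.mulRight ℂ E₂)) ∧
    (LinearMap.range (LinearMap.mulRight ℂ n) ⊔
        LinearMap.ker (LinearMap.mulRight ℂ (n ^ 4)) = ⊤) ∧
    -- the pairings
    (∀ i j : ℕ, 1 ≤ i → i ≤ 3 → 1 ≤ j → j ≤ 3 →
      (1 / 4 : ℂ) * B (H ^ (i - 1)) (H ^ j)
        = if i + j = 4 then 1 / 32 else 0) ∧
    (B E₁ (E₁ * E₂) = 1 / 4) ∧
    (B E₂ (E₂ * n) = 1 / 2) ∧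
    (B 1 (n ^ 3) = 8) := by
  obtain ⟨hb0, hb1, hb2, hb3, hb4, hb5, hb6, hb7⟩ := hbA
  intro n
  have hn : n = (4 : ℂ) • H := rfl
  -- key algebraic facts
  have hc : H ^ 2 * E₂ = 0 := by
    have h2 : H ^ 2 * E₂ + H ^ 2 * E₂ = 0 := by linear_combination E₁ * hrel2 - H * hrel3
    have h3 : (2 : ℂ) • (H ^ 2 * E₂) = 0 := by rw [two_smul]; exact h2
    rcases smul_eq_zero.mp h3 with h | h
    · exact absurd h (by norm_num)
    · exact h
  have hH4 : H ^ 4 = 0 := by linear_combination H ^ 2 * hrel1 + E₂ * hc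
  have hn4 : n ^ 4 = 0 := by rw [hn, smul_pow, hH4, smul_zero]
  -- product lemmas
  have hE1H : E₁ * H = 0 := by linear_combination hrel2
  have hHE2H : (H * E₂) * H = 0 := by linear_combination hc
  have hE1E2H : (E₁ * E₂) * H = 0 := by linear_combination E₂ * hrel2
  have hH3H : H ^ 3 * H = 0 := by linear_combination hH4
  have hE2H : E₂ * H = H * E₂ := mul_comm _ _
  have hHH : H * H = H ^ 2 := by ring
  have hH2H : H ^ 2 * H = H ^ 3 := by ring
  have h1H2 : (1 : A) * H ^ 2 = H ^ 2 := one_mul _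
  have hHH2 : H * H ^ 2 = H ^ 3 := by ring
  have hE1H2 : E₁ * H ^ 2 = 0 := by linear_combination H * hrel2
  have hE2H2 : E₂ * H ^ 2 = 0 := by linear_combination hc
  have hH2H2 : H ^ 2 * H ^ 2 = 0 := by linear_combination hH4
  have hHE2H2 : (H * E₂) * H ^ 2 = 0 := by linear_combination H * hc
  have hE1E2H2 : (E₁ * E₂) * H ^ 2 = 0 := by linear_combination (H * E₂) * hrel2
  have hH3H2 : H ^ 3 * H ^ 2 = 0 := by linear_combination H * hH4
  have hHH3 : H * H ^ 3 = 0 := by linear_combination hH4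
  have hE1H3 : E₁ * H ^ 3 = 0 := by linear_combination H ^ 2 * hrel2
  have hE2H3 : E₂ * H ^ 3 = 0 := by linear_combination H * hc
  have hH2H3 : H ^ 2 * H ^ 3 = 0 := by linear_combination H * hH4
  have hHE2H3 : (H * E₂) * H ^ 3 = 0 := by linear_combination H ^ 2 * hc
  have hE1E2H3 : (E₁ * E₂) * H ^ 3 = 0 := by linear_combination (H ^ 2 * E₂) * hrel2
  have hH3H3 : H ^ 3 * H ^ 3 = 0 := by linear_combination H ^ 2 * hH4
  -- B values
  have hB03 : B 1 (H ^ 3) = 1 / 8 := by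
    have := hBH 0 3 (by norm_num) (le_refl 3); simpa using this
  have hB12 : B H (H ^ 2) = 1 / 8 := by
    have := hBH 1 2 (by norm_num) (by norm_num); simpa using this
  have hB21 : B (H ^ 2) H = 1 / 8 := by
    have := hBH 2 1 (by norm_num) (by norm_num); simpa using this
  have hE2E2 : E₂ * E₂ = H ^ 2 := by linear_combination -hrel1
  have hB13 : B 1 (n ^ 3) = 8 := by
    rw [hn, smul_pow, map_smul, hB03, smul_eq_mul]
    norm_num
  have hn3 : n ^ 3 ≠ 0 := by
    intro h
    rw [h, map_zero] at hB13
    norm_num at hB13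
  -- basis expansion
  have hx : ∀ x : A, (bA.repr x 0) • (1 : A) + (bA.repr x 1) • H + (bA.repr x 2) • E₁
      + (bA.repr x 3) • E₂ + (bA.repr x 4) • H ^ 2 + (bA.repr x 5) • (H * E₂)
      + (bA.repr x 6) • (E₁ * E₂) + (bA.repr x 7) • H ^ 3 = x := by
    intro x
    have := bA.sum_repr x
    rwa [Fin.sum_univ_eight, hb0, hb1, hb2, hb3, hb4, hb5, hb6, hb7] at this
  -- range equality
  have hrange : LinearMap.range (LinearMap.mulRight ℂ n)
      = LinearMap.range (LinearMap.mulRight ℂ H) := by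
    apply le_antisymm
    · rintro x ⟨y, rfl⟩
      exact LinearMap.mem_range.mpr ⟨(4 : ℂ) • y, by
        simp [LinearMap.mulRight_apply, hn, mul_smul_comm, smul_mul_assoc]⟩
    · rintro x ⟨y, rfl⟩
      refine LinearMap.mem_range.mpr ⟨(4⁻¹ : ℂ) • y, ?_⟩
      simp only [LinearMap.mulRight_apply, hn, mul_smul_comm, smul_mul_assoc, smul_smul]
      norm_num
  have hkern : ∀ x : A, x * n = 0 ↔ x * H = 0 := by
    intro x
    constructor
    · intro hx0
      rw [hn, mul_smul_comm] at hx0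
      rcases smul_eq_zero.mp hx0 with h | h
      · exact absurd h (by norm_num)
      · exact h
    · intro hx0; rw [hn, mul_smul_comm, hx0, smul_zero]
  have hkern2 : ∀ x : A, x * n ^ 2 = 0 ↔ x * H ^ 2 = 0 := by
    intro x
    rw [hn, smul_pow, mul_smul_comm, smul_eq_zero]
    constructor
    · rintro (h | h)
      · exact absurd h (by norm_num)
      · exact h
    · exact fun h => Or.inr h
  have hkern3 : ∀ x : A, x * n ^ 3 = 0 ↔ x * H ^ 3 = 0 := by
    intro x
    rw [hn, smul_pow, mul_smul_comm, smul_eq_zero]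
    constructor
    · rintro (h | h)
      · exact absurd h (by norm_num)
      · exact h
    · exact fun h => Or.inr h
  -- kernel of ·H lands in (H) + (E₁)
  have hkerH : ∀ x : A, x * H = 0 →
      x ∈ LinearMap.range (LinearMap.mulRight ℂ H) ⊔ LinearMap.range (LinearMap.mulRight ℂ E₁) := by
    intro x hxH
    have e : x * H = (bA.repr x 0) • H + (bA.repr x 1) • H ^ 2 + (bA.repr x 3) • (H * E₂)
        + (bA.repr x 4) • H ^ 3 := by
      conv_lhs => rw [← hx x]
      simp only [add_mul, smul_mul_assoc, one_mul, hE1H, hHE2H, hE1E2H, hH3H, hE2H, hHH,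
        hH2H, smul_zero, add_zero, zero_add]
    have e0 : (bA.repr x 0) • bA 1 + (bA.repr x 1) • bA 4 + (bA.repr x 3) • bA 5
        + (bA.repr x 4) • bA 7 = 0 := by
      rw [hb1, hb4, hb5, hb7, ← e, hxH]
    have z0 : bA.repr x 0 = 0 := by
      have h := congrArg (fun z => bA.repr z 1) e0
      simpa [Finsupp.single_apply] using h
    have z1 : bA.repr x 1 = 0 := by
      have h := congrArg (fun z => bA.repr z 4) e0
      simpa [Finsupp.single_apply] using h
    have z3 : bA.repr x 3 = 0 := by
      have h := congrArg (fun z => bA.repr z 5) e0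
      simpa [Finsupp.single_apply] using h
    have z4 : bA.repr x 4 = 0 := by
      have h := congrArg (fun z => bA.repr z 7) e0
      simpa [Finsupp.single_apply] using h
    rw [← hx x, z0, z1, z3, z4]
    simp only [zero_smul, zero_add, add_zero]
    refine add_mem (add_mem (add_mem ?_ ?_) ?_) ?_ <;> apply Submodule.smul_mem
    · exact Submodule.mem_sup_right (LinearMap.mem_range.mpr ⟨1, one_mul E₁⟩)
    · exact Submodule.mem_sup_left (LinearMap.mem_range.mpr ⟨E₂, mul_comm E₂ H⟩)
    · exact Submodule.mem_sup_right (LinearMap.mem_range.mpr ⟨E₂, mul_comm E₂ E₁⟩)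
    · exact Submodule.mem_sup_left (LinearMap.mem_range.mpr ⟨H ^ 2, hH2H⟩)
  -- kernel of ·H² lands in (H) + (E₁) + (E₂)
  have hkerH2 : ∀ x : A, x * H ^ 2 = 0 →
      x ∈ LinearMap.range (LinearMap.mulRight ℂ H) ⊔ LinearMap.range (LinearMap.mulRight ℂ E₁)
        ⊔ LinearMap.range (LinearMap.mulRight ℂ E₂) := by
    intro x hxH
    have e : x * H ^ 2 = (bA.repr x 0) • H ^ 2 + (bA.repr x 1) • H ^ 3 := by
      conv_lhs => rw [← hx x]
      simp only [add_mul, smul_mul_assoc, one_mul, hE1H2, hE2H2, hH2H2, hHE2H2, hE1E2H2,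
        hH3H2, hHH2, smul_zero, add_zero, zero_add]
    have e0 : (bA.repr x 0) • bA 4 + (bA.repr x 1) • bA 7 = 0 := by
      rw [hb4, hb7, ← e, hxH]
    have z0 : bA.repr x 0 = 0 := by
      have h := congrArg (fun z => bA.repr z 4) e0
      simpa [Finsupp.single_apply] using h
    have z1 : bA.repr x 1 = 0 := by
      have h := congrArg (fun z => bA.repr z 7) e0
      simpa [Finsupp.single_apply] using h
    rw [← hx x, z0, z1]
    simp only [zero_smul, zero_add, add_zero]
    refine add_mem (add_mem (add_mem (add_mem (add_mem ?_ ?_) ?_) ?_) ?_) ?_ <;>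
      apply Submodule.smul_mem
    · exact Submodule.mem_sup_left (Submodule.mem_sup_right (LinearMap.mem_range.mpr ⟨1, one_mul E₁⟩))
    · exact Submodule.mem_sup_right (LinearMap.mem_range.mpr ⟨1, one_mul E₂⟩)
    · exact Submodule.mem_sup_left (Submodule.mem_sup_left (LinearMap.mem_range.mpr ⟨H, hHH⟩))
    · exact Submodule.mem_sup_left (Submodule.mem_sup_left (LinearMap.mem_range.mpr ⟨E₂, mul_comm E₂ H⟩))
    · exact Submodule.mem_sup_right (LinearMap.mem_range.mpr ⟨E₁, rfl⟩)
    · exact Submodule.mem_sup_left (Submodule.mem_sup_left (LinearMap.mem_range.mpr ⟨H ^ 2, hH2H⟩))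
  -- kernel of ·H³ lands in (H) + (E₁) + (E₂)
  have hkerH3 : ∀ x : A, x * H ^ 3 = 0 →
      x ∈ LinearMap.range (LinearMap.mulRight ℂ H) ⊔ LinearMap.range (LinearMap.mulRight ℂ E₁)
        ⊔ LinearMap.range (LinearMap.mulRight ℂ E₂) := by
    intro x hxH
    have e : x * H ^ 3 = (bA.repr x 0) • H ^ 3 := by
      conv_lhs => rw [← hx x]
      simp only [add_mul, smul_mul_assoc, one_mul, hHH3, hE1H3, hE2H3, hH2H3, hHE2H3,
        hE1E2H3, hH3H3, smul_zero, add_zero, zero_add]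
    have e0 : (bA.repr x 0) • bA 7 = 0 := by rw [hb7, ← e, hxH]
    have z0 : bA.repr x 0 = 0 := by
      have h := congrArg (fun z => bA.repr z 7) e0
      simpa [Finsupp.single_apply] using h
    rw [← hx x, z0]
    simp only [zero_smul, zero_add, add_zero]
    refine add_mem (add_mem (add_mem (add_mem (add_mem (add_mem ?_ ?_) ?_) ?_) ?_) ?_) ?_ <;>
      apply Submodule.smul_mem
    · exact Submodule.mem_sup_left (Submodule.mem_sup_left (LinearMap.mem_range.mpr ⟨1, one_mul H⟩))
    · exact Submodule.mem_sup_left (Submodule.mem_sup_right (LinearMap.mem_range.mpr ⟨1, one_mul E₁⟩))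
    · exact Submodule.mem_sup_right (LinearMap.mem_range.mpr ⟨1, one_mul E₂⟩)
    · exact Submodule.mem_sup_left (Submodule.mem_sup_left (LinearMap.mem_range.mpr ⟨H, hHH⟩))
    · exact Submodule.mem_sup_left (Submodule.mem_sup_left (LinearMap.mem_range.mpr ⟨E₂, mul_comm E₂ H⟩))
    · exact Submodule.mem_sup_right (LinearMap.mem_range.mpr ⟨E₁, rfl⟩)
    · exact Submodule.mem_sup_left (Submodule.mem_sup_left (LinearMap.mem_range.mpr ⟨H ^ 2, hH2H⟩))
  refine ⟨⟨hn4, hn3⟩, hrange, ?_, ?_, ?_, ?_, ?_, ?_, hB13⟩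
  · -- I₁
    apply le_antisymm
    · apply sup_le
      · rw [hrange]; exact le_sup_left
      · intro x hxk
        have hx0 : x * H = 0 := (hkern x).mp (by simpa using LinearMap.mem_ker.mp hxk)
        exact hkerH x hx0
    · apply sup_le
      · rw [← hrange]; exact le_sup_left
      · rintro _ ⟨y, rfl⟩
        apply Submodule.mem_sup_right
        rw [LinearMap.mem_ker, LinearMap.mulRight_apply, LinearMap.mulRight_apply]
        exact (hkern _).mpr (by linear_combination y * hrel2)
  · -- I₂, I₃
    intro k hk
    rcases hk with rfl | rfl
    · apply le_antisymm
      · apply sup_le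
        · rw [hrange]; exact le_sup_left.trans le_sup_left
        · intro x hxk
          have hx0 : x * H ^ 2 = 0 := (hkern2 x).mp (by simpa using LinearMap.mem_ker.mp hxk)
          exact hkerH2 x hx0
      · apply sup_le
        · apply sup_le
          · rw [← hrange]; exact le_sup_left
          · rintro _ ⟨y, rfl⟩
            apply Submodule.mem_sup_right
            rw [LinearMap.mem_ker, LinearMap.mulRight_apply, LinearMap.mulRight_apply]
            exact (hkern2 _).mpr (by linear_combination (y * H) * hrel2)
        · rintro _ ⟨y, rfl⟩
          apply Submodule.mem_sup_right
          rw [LinearMap.mem_ker, LinearMap.mulRight_apply, LinearMap.mulRight_apply]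
          exact (hkern2 _).mpr (by linear_combination y * hc)
    · apply le_antisymm
      · apply sup_le
        · rw [hrange]; exact le_sup_left.trans le_sup_left
        · intro x hxk
          have hx0 : x * H ^ 3 = 0 := (hkern3 x).mp (by simpa using LinearMap.mem_ker.mp hxk)
          exact hkerH3 x hx0
      · apply sup_le
        · apply sup_le
          · rw [← hrange]; exact le_sup_left
          · rintro _ ⟨y, rfl⟩
            apply Submodule.mem_sup_right
            rw [LinearMap.mem_ker, LinearMap.mulRight_apply, LinearMap.mulRight_apply]
            exact (hkern3 _).mpr (by linear_combination (y * H ^ 2) * hrel2)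
        · rintro _ ⟨y, rfl⟩
          apply Submodule.mem_sup_right
          rw [LinearMap.mem_ker, LinearMap.mulRight_apply, LinearMap.mulRight_apply]
          exact (hkern3 _).mpr (by linear_combination (y * H) * hc)
  · -- I₄
    rw [hn4, eq_top_iff]
    intro x _
    apply Submodule.mem_sup_right
    simp [LinearMap.mem_ker]
  · -- pairings (H^i, H^j)
    intro i j hi1 hi3 hj1 hj3
    rw [hBH (i - 1) j (by omega) hj3,
      if_congr (by omega : (i - 1) + j = 3 ↔ i + j = 4) rfl rfl]
    split_ifs <;> norm_num
  · -- B E₁ (E₁E₂)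
    have h1 : E₁ * E₁ = H * E₂ + H * E₂ := by linear_combination hrel3
    calc B E₁ (E₁ * E₂) = B (E₁ * E₁) E₂ := (hfrob _ _ _).symm
      _ = B (H * E₂) E₂ + B (H * E₂) E₂ := by rw [h1, map_add, LinearMap.add_apply]
      _ = B H (H ^ 2) + B H (H ^ 2) := by rw [hfrob, hE2E2]
      _ = 1 / 4 := by rw [hB12]; norm_num
  · -- B E₂ (E₂ n)
    have h2 : B E₂ (E₂ * H) = 1 / 8 := by rw [← hfrob, hE2E2, hB21]
    rw [hn, mul_smul_comm, map_smul, h2, smul_eq_mul]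
    norm_num
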